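/- There exists a bounded linear operator Q : E_X → X such that Q(e_n) = x_n for every n ∈ ℕ, the operator norm of Q equals 1, and Q is surjective. In particular, X is a quotient of E_X. -/

import Mathlib

open Filter Topology

set_option maxHeartbeats 1000000 in
/-- There exists a bounded linear operator `Q : E_X → X` with
`Q (e n) = x n` for every `n`, of operator norm exactly `1`, which is
surjective; in particular `X` is a quotient of `E_X`. -/
theorem stmt_5 {X : Type*} [NormedAddCommGroup X] [NormedSpace ℝ X] [CompleteSpace X]
    (x : ℕ → X) (hx1 : ∀ n, ‖x n‖ = 1)
    (hxd : ∀ y : X, ‖y‖ = 1 → ∀ ε : ℝ, 0 < ε → ∃ n, ‖y - x n‖ < ε)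
    {E : Type*} [NormedAddCommGroup E] [NormedSpace ℝ E] [CompleteSpace E]
    (ι : (ℕ →₀ ℝ) →ₗ[ℝ] E) (hιd : DenseRange ι)
    (hnorm : ∀ z : ℕ →₀ ℝ,
      ‖ι z‖ = ⨆ m : ℕ, ‖∑ n ∈ Finset.range (m + 1), z n • x n‖) :
    ∃ Q : E →L[ℝ] X, (∀ n : ℕ, Q (ι (Finsupp.single n 1)) = x n) ∧
      ‖Q‖ = 1 ∧ Function.Surjective Q := by
  classical
  set S : (ℕ →₀ ℝ) →ₗ[ℝ] X := Finsupp.linearCombination ℝ x with hS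
  -- partial sums are bounded by the ℓ¹ norm
  have hbdd : ∀ z : ℕ →₀ ℝ, ∀ m : ℕ,
      ‖∑ n ∈ Finset.range (m + 1), z n • x n‖ ≤ ∑ n ∈ z.support, |z n| := by
    intro z m
    calc ‖∑ n ∈ Finset.range (m + 1), z n • x n‖
        ≤ ∑ n ∈ Finset.range (m + 1), ‖z n • x n‖ := norm_sum_le _ _
      _ = ∑ n ∈ Finset.range (m + 1), |z n| := by
          refine Finset.sum_congr rfl fun n _ => ?_
          rw [norm_smul, hx1, mul_one, Real.norm_eq_abs]
      _ ≤ ∑ n ∈ Finset.range (m + 1) ∪ z.support, |z n| :=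
          Finset.sum_le_sum_of_subset_of_nonneg Finset.subset_union_left
            (fun n _ _ => abs_nonneg _)
      _ = ∑ n ∈ z.support, |z n| := by
          refine (Finset.sum_subset Finset.subset_union_right fun n _ hn => ?_).symm
          rw [Finsupp.notMem_support_iff.mp hn, abs_zero]
  have hBdd : ∀ z : ℕ →₀ ℝ, BddAbove (Set.range fun m : ℕ =>
      ‖∑ n ∈ Finset.range (m + 1), z n • x n‖) := fun z =>
    ⟨∑ n ∈ z.support, |z n|, Set.forall_mem_range.mpr (hbdd z)⟩
  have hle : ∀ z : ℕ →₀ ℝ, ∀ m : ℕ,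
      ‖∑ n ∈ Finset.range (m + 1), z n • x n‖ ≤ ‖ι z‖ := by
    intro z m; rw [hnorm]; exact le_ciSup (hBdd z) m
  have hpartial : ∀ z : ℕ →₀ ℝ, ∀ m : ℕ, z.support ⊆ Finset.range (m + 1) →
      ∑ n ∈ Finset.range (m + 1), z n • x n = S z := by
    intro z m hsub
    rw [hS, Finsupp.linearCombination_apply, Finsupp.sum]
    exact (Finset.sum_subset hsub fun n _ hn => by
      rw [Finsupp.notMem_support_iff.mp hn, zero_smul]).symm
  have hSle : ∀ z : ℕ →₀ ℝ, ‖S z‖ ≤ ‖ι z‖ := by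
    intro z
    have hsub : z.support ⊆ Finset.range (z.support.sup id + 1) := fun n hn =>
      Finset.mem_range_succ_iff.mpr (Finset.le_sup (f := id) hn)
    rw [← hpartial z _ hsub]; exact hle z _
  -- ι is injective
  have hinj : Function.Injective ι := by
    rw [injective_iff_map_eq_zero]
    intro z hz
    have h0 : ∀ m : ℕ, ∑ n ∈ Finset.range m, z n • x n = 0 := by
      intro m
      match m with
      | 0 => simp
      | m + 1 =>
        have h := hle z m
        rw [hz, norm_zero] at h
        exact norm_le_zero_iff.mp h
    ext n
    have h1 := h0 (n + 1)
    rw [Finset.sum_range_succ, h0 n, zero_add] at h1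
    have h2 : ‖z n • x n‖ = 0 := by rw [h1, norm_zero]
    rw [norm_smul, hx1, mul_one, norm_eq_zero] at h2
    simpa using h2
  set eqv : (ℕ →₀ ℝ) ≃ₗ[ℝ] LinearMap.range ι := LinearEquiv.ofInjective ι hinj with heqv
  have hcoe : ∀ v : LinearMap.range ι, ι (eqv.symm v) = (v : E) := by
    intro v
    conv_rhs => rw [← eqv.apply_symm_apply v]
    rw [heqv]
    simp
  set f₀ : LinearMap.range ι →ₗ[ℝ] X := S ∘ₗ (eqv.symm : LinearMap.range ι →ₗ[ℝ] (ℕ →₀ ℝ))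
    with hf₀def
  have hf₀ : ∀ v : LinearMap.range ι, ‖f₀ v‖ ≤ 1 * ‖v‖ := by
    intro v
    rw [one_mul]
    have h := hSle (eqv.symm v)
    rw [hcoe v] at h
    exact h
  set f : LinearMap.range ι →L[ℝ] X := f₀.mkContinuous 1 hf₀ with hf
  set e : LinearMap.range ι →L[ℝ] E := (LinearMap.range ι).subtypeL with he
  have he_dense : DenseRange e := by
    show Dense (Set.range e)
    have h1 : Set.range e = Set.range ι := by
      rw [show (e : LinearMap.range ι → E) = Subtype.val from rfl, Subtype.range_coe]
      rfl
    rw [h1]; exact hιd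
  have he_bound : ∀ v : LinearMap.range ι, ‖v‖ ≤ ((1 : NNReal) : ℝ) * ‖e v‖ := by
    intro v; simp [he]
  set Q : E →L[ℝ] X := f.extend e with hQ
  -- Q ∘ ι = S
  have hQι : ∀ z : ℕ →₀ ℝ, Q (ι z) = S z := by
    intro z
    have hv : ι z ∈ LinearMap.range ι := LinearMap.mem_range_self ι z
    have h2 : Q (e ⟨ι z, hv⟩) = f ⟨ι z, hv⟩ := ContinuousLinearMap.extend_eq _ he_dense
      (ContinuousLinearMap.isUniformEmbedding_of_bound e he_bound).isUniformInducing _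
    have h1 : e (⟨ι z, hv⟩ : LinearMap.range ι) = ι z := rfl
    rw [h1] at h2
    rw [h2]
    show S (eqv.symm ⟨ι z, hv⟩) = S z
    congr 1
    apply hinj
    rw [hcoe]
  have hQe : ∀ n : ℕ, Q (ι (Finsupp.single n 1)) = x n := by
    intro n
    rw [hQι, hS, Finsupp.linearCombination_single, one_smul]
  -- norm bounds
  have hsingle : ∀ n : ℕ, ‖ι (Finsupp.single n 1)‖ ≤ 1 := by
    intro n
    rw [hnorm]
    refine ciSup_le fun m => (hbdd _ m).trans ?_
    rw [Finsupp.support_single_ne_zero n one_ne_zero, Finset.sum_singleton,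
      Finsupp.single_eq_same, abs_one]
  have hQnorm_le : ‖Q‖ ≤ 1 := by
    have h := ContinuousLinearMap.opNorm_extend_le f he_dense he_bound
    have hfn : ‖f‖ ≤ 1 := f₀.mkContinuous_norm_le zero_le_one hf₀
    rw [NNReal.coe_one, one_mul] at h
    exact h.trans hfn
  have hQnorm : ‖Q‖ = 1 := by
    refine le_antisymm hQnorm_le ?_
    have h1 : ‖Q (ι (Finsupp.single 0 1))‖ = 1 := by rw [hQe 0]; exact hx1 0
    have h2 := Q.le_opNorm (ι (Finsupp.single 0 1))
    calc (1 : ℝ) = ‖Q (ι (Finsupp.single 0 1))‖ := h1.symm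
      _ ≤ ‖Q‖ * ‖ι (Finsupp.single 0 1)‖ := h2
      _ ≤ ‖Q‖ * 1 := mul_le_mul_of_nonneg_left (hsingle 0) (norm_nonneg Q)
      _ = ‖Q‖ := mul_one _
  -- approximation step
  have happrox : ∀ y : X, ∃ g : E, ‖g‖ ≤ ‖y‖ ∧ ‖y - Q g‖ ≤ ‖y‖ / 2 := by
    intro y
    rcases eq_or_ne y 0 with rfl | hy
    · exact ⟨0, by simp⟩
    · have hy0 : ‖y‖ ≠ 0 := norm_ne_zero_iff.mpr hy
      have hy' : ‖(‖y‖⁻¹ • y)‖ = 1 := by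
        rw [norm_smul, norm_inv, norm_norm, inv_mul_cancel₀ hy0]
      obtain ⟨n, hn⟩ := hxd _ hy' (1 / 2) (by norm_num)
      refine ⟨‖y‖ • ι (Finsupp.single n 1), ?_, ?_⟩
      · rw [norm_smul, norm_norm]
        calc ‖y‖ * ‖ι (Finsupp.single n 1)‖ ≤ ‖y‖ * 1 :=
              mul_le_mul_of_nonneg_left (hsingle n) (norm_nonneg y)
          _ = ‖y‖ := mul_one _
      · rw [map_smul, hQe n]
        have hrw : y - ‖y‖ • x n = ‖y‖ • (‖y‖⁻¹ • y - x n) := by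
          rw [smul_sub, smul_inv_smul₀ hy0]
        rw [hrw, norm_smul, norm_norm]
        nlinarith [norm_nonneg y]
  choose G hG1 hG2 using happrox
  have hsurj : Function.Surjective Q := by
    intro y₀
    set u : ℕ → X := fun k => Nat.rec y₀ (fun _ v => v - Q (G v)) k with hu
    have hus : ∀ k : ℕ, u (k + 1) = u k - Q (G (u k)) := fun k => rfl
    have hunorm : ∀ k : ℕ, ‖u k‖ ≤ ‖y₀‖ * (1 / 2) ^ k := by
      intro k
      induction k with
      | zero => simp [hu]
      | succ k ih =>
        have h := hG2 (u k)
        rw [← hus k] at h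
        calc ‖u (k + 1)‖ ≤ ‖u k‖ / 2 := h
          _ ≤ (‖y₀‖ * (1 / 2) ^ k) / 2 := by linarith
          _ = ‖y₀‖ * (1 / 2) ^ (k + 1) := by ring
    have hsum : Summable fun k => G (u k) := by
      refine Summable.of_norm_bounded
        ((summable_geometric_of_lt_one (by norm_num) (by norm_num : (1 / 2 : ℝ) < 1)).mul_left
          ‖y₀‖) fun k => (hG1 (u k)).trans (hunorm k)
    refine ⟨∑' k, G (u k), ?_⟩
    rw [Q.map_tsum hsum]
    have hQsum : Summable fun k => Q (G (u k)) := hsum.map Q Q.continuous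
    have heq : ∀ m : ℕ, ∑ k ∈ Finset.range m, Q (G (u k)) = y₀ - u m := by
      intro m
      have h : ∀ k, Q (G (u k)) = u k - u (k + 1) := fun k => by
        rw [hus k]; abel
      calc ∑ k ∈ Finset.range m, Q (G (u k))
          = ∑ k ∈ Finset.range m, (u k - u (k + 1)) :=
            Finset.sum_congr rfl fun k _ => h k
        _ = u 0 - u m := Finset.sum_range_sub' u m
        _ = y₀ - u m := rfl
    have hu_lim : Tendsto u atTop (𝓝 0) := by
      refine squeeze_zero_norm hunorm ?_
      have := (tendsto_pow_atTop_nhds_zero_of_lt_one (by norm_num : (0:ℝ) ≤ 1 / 2)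
        (by norm_num : (1 / 2 : ℝ) < 1)).const_mul ‖y₀‖
      simpa using this
    have hten : Tendsto (fun m => ∑ k ∈ Finset.range m, Q (G (u k))) atTop (𝓝 y₀) := by
      simp_rw [heq]
      simpa using tendsto_const_nhds.sub hu_lim
    exact tendsto_nhds_unique hQsum.hasSum.tendsto_sum_nat hten
  exact ⟨Q, hQe, hQnorm, hsurj⟩
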